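/- For every finite simple graph G = (V,E) on n ≥ 2 vertices, there exists a partition {V_1, …, V_h} of V with h ≤ ⌈log₂ n⌉ that induces an (h, 1)-vertex-expander hierarchy of G: for every level ℓ ≤ h and every connected component Γ of the subgraph G_{≤ℓ} induced on V_1 ∪ … ∪ V_ℓ, the set V_ℓ ∩ V(Γ) is 1-vertex-expanding in the induced subgraph G[Γ], i.e., for every vertex cut (L,S,R) of G[Γ], |S| ≥ min{|(V_ℓ ∩ V(Γ)) ∩ (L∪S)|, |(V_ℓ ∩ V(Γ)) ∩ (R∪S)|}. -/

import Mathlib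

/-- `Γ` is (the vertex set of) a connected component of the subgraph of `G`
induced on `A`: it is a nonempty subset of `A`, connected in the induced sense,
and closed under adjacency within `A`. -/
def IsCompOf {V : Type*} (G : SimpleGraph V) (A Γ : Set V) : Prop :=
  Γ ⊆ A ∧ Γ.Nonempty ∧ (G.induce Γ).Connected ∧
    ∀ u ∈ Γ, ∀ v ∈ A, G.Adj u v → v ∈ Γ

/-- `X` is `φ`-vertex-expanding in the subgraph of `G` induced on the ground
set `A`: for every vertex cut `(L, S, R)` of `G[A]`,
`|S| ≥ φ · min{|X ∩ (L∪S)|, |X ∩ (R∪S)|}`. -/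
def IsVertexExpandingOn {V : Type*} (G : SimpleGraph V) (A X : Set V) (φ : ℝ) : Prop :=
  ∀ L S R : Set V, L ∪ S ∪ R = A →
    Disjoint L S → Disjoint L R → Disjoint S R →
    L.Nonempty → R.Nonempty →
    (∀ u ∈ L, ∀ v ∈ R, ¬ G.Adj u v) →
    φ * min ((X ∩ (L ∪ S)).ncard : ℝ) ((X ∩ (R ∪ S)).ncard : ℝ) ≤ (S.ncard : ℝ)

namespace VEH
variable {V : Type*} {G : SimpleGraph V}

lemma reach_of_mem_support {H : SimpleGraph V} {x y z : V} (p : H.Walk x y)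
    (hz : z ∈ p.support) : H.Reachable x z := by
  induction p with
  | nil => simp at hz; subst hz; exact SimpleGraph.Reachable.refl _
  | cons h q ih =>
    rw [SimpleGraph.Walk.support_cons] at hz
    rcases List.mem_cons.mp hz with h1 | h2
    · subst h1; exact SimpleGraph.Reachable.refl _
    · exact (SimpleGraph.Adj.reachable h).trans (ih h2)

lemma reach_transfer {A B : Set V} {x y : ↥A} (p : (G.induce A).Walk x y)
    (hs : ∀ z ∈ p.support, (z : V) ∈ B) :
    (G.induce B).Reachable ⟨x, hs x p.start_mem_support⟩ ⟨y, hs y p.end_mem_support⟩ := by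
  induction p with
  | nil => exact SimpleGraph.Reachable.refl _
  | cons h q ih =>
    rename_i u v w
    have hu : (u : V) ∈ B := hs u (by simp [SimpleGraph.Walk.support_cons])
    have hv : (v : V) ∈ B := hs v (by simp [SimpleGraph.Walk.support_cons])
    have hadj : (G.induce B).Adj ⟨u, hu⟩ ⟨v, hv⟩ := h
    refine hadj.reachable.trans ?_
    exact ih (fun z hz => hs z (by rw [SimpleGraph.Walk.support_cons]; exact List.mem_cons_of_mem _ hz))

lemma walk_closed {W A C : Set V} (hWA : W ⊆ A)
    (hC : ∀ u ∈ C, ∀ v ∈ A, G.Adj u v → v ∈ C) {x y : ↥W}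
    (p : (G.induce W).Walk x y) (hx : (x : V) ∈ C) : (y : V) ∈ C := by
  induction p with
  | nil => exact hx
  | cons h q ih =>
    rename_i u v w
    exact ih (hC u hx v (hWA v.2) h)

/-- the connected component of `A` containing `w` -/
def comp (G : SimpleGraph V) (A : Set V) (w : V) (hw : w ∈ A) : Set V :=
  {v | ∃ h : v ∈ A, (G.induce A).Reachable ⟨w, hw⟩ ⟨v, h⟩}

lemma comp_isCompOf (A : Set V) (w : V) (hw : w ∈ A) : IsCompOf G A (comp G A w hw) := by
  have hsub : comp G A w hw ⊆ A := fun v hv => hv.1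
  have hmem : w ∈ comp G A w hw := ⟨hw, SimpleGraph.Reachable.refl _⟩
  refine ⟨hsub, ⟨w, hmem⟩, ?_, ?_⟩
  · refine { preconnected := ?_, nonempty := ?_ }
    · -- preconnected
      rintro ⟨x, hx⟩ ⟨y, hy⟩
      obtain ⟨hxA, hrx⟩ := hx
      obtain ⟨hyA, hry⟩ := hy
      obtain ⟨p⟩ := hrx
      obtain ⟨q⟩ := hry
      have hps : ∀ z ∈ p.support, (z : V) ∈ comp G A w hw := by
        intro z hz; exact ⟨z.2, reach_of_mem_support p hz⟩
      have hqs : ∀ z ∈ q.support, (z : V) ∈ comp G A w hw := by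
        intro z hz; exact ⟨z.2, reach_of_mem_support q hz⟩
      have h1 := reach_transfer p hps
      have h2 := reach_transfer q hqs
      exact (h1.symm.trans h2 : (G.induce _).Reachable _ _)
    · exact ⟨⟨w, hmem⟩⟩
  · rintro u ⟨huA, hru⟩ v hvA hadj
    exact ⟨hvA, hru.trans (SimpleGraph.Adj.reachable (by exact hadj : (G.induce A).Adj ⟨u, huA⟩ ⟨v, hvA⟩))⟩

/-- a nonempty connected subset of `A` is contained in some component of `A` -/
lemma exists_comp_superset {A W : Set V} (hWA : W ⊆ A) (hne : W.Nonempty)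
    (hconn : (G.induce W).Connected) : ∃ Γ, IsCompOf G A Γ ∧ W ⊆ Γ := by
  obtain ⟨w, hw⟩ := hne
  refine ⟨comp G A w (hWA hw), comp_isCompOf A w (hWA hw), ?_⟩
  intro u hu
  obtain ⟨p⟩ := hconn.preconnected ⟨w, hw⟩ ⟨u, hu⟩
  have := reach_transfer (B := A) p (fun z _ => hWA z.2)
  exact ⟨hWA hu, this⟩

/-- components intersecting are equal -/
lemma comp_eq_of_inter {A Γ₁ Γ₂ : Set V} (h1 : IsCompOf G A Γ₁) (h2 : IsCompOf G A Γ₂)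
    (hne : (Γ₁ ∩ Γ₂).Nonempty) : Γ₁ = Γ₂ := by
  obtain ⟨v, hv1, hv2⟩ := hne
  have key : ∀ (Δ₁ Δ₂ : Set V), IsCompOf G A Δ₁ → IsCompOf G A Δ₂ → v ∈ Δ₁ → v ∈ Δ₂ → Δ₁ ⊆ Δ₂ := by
    intro Δ₁ Δ₂ hd1 hd2 hv1 hv2 u hu
    obtain ⟨p⟩ := hd1.2.2.1.preconnected ⟨v, hv1⟩ ⟨u, hu⟩
    exact walk_closed hd1.1 hd2.2.2.2 p hv2
  exact Set.Subset.antisymm (key _ _ h1 h2 hv1 hv2) (key _ _ h2 h1 hv2 hv1)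

/-- a connected set inside `L ∪ R` with no `L`-`R` edges lies in `L` or in `R` -/
lemma connected_subset_union {W L R : Set V} (hW : W ⊆ L ∪ R)
    (hconn : (G.induce W).Connected)
    (hno : ∀ u ∈ L, ∀ v ∈ R, ¬ G.Adj u v) : W ⊆ L ∨ W ⊆ R := by
  obtain ⟨⟨w, hw⟩⟩ := hconn.nonempty
  have stay : ∀ (C D : Set V), W ⊆ C ∪ D → (∀ u ∈ C, ∀ v ∈ D, ¬ G.Adj u v) →
      w ∈ C → W ⊆ C := by
    intro C D hWCD hnoCD hwC u hu
    obtain ⟨p⟩ := hconn.preconnected ⟨w, hw⟩ ⟨u, hu⟩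
    refine walk_closed (le_refl W) ?_ p hwC
    intro a ha b hb hadj
    rcases hWCD hb with h | h
    · exact h
    · exact absurd hadj (hnoCD a ha b h)
  rcases hW hw with h | h
  · exact Or.inl (stay L R hW hno h)
  · exact Or.inr (stay R L (by rwa [Set.union_comm]) (fun u hu v hv hadj => hno v hv u hu hadj.symm) h)


/-- the "quality" predicate: removing `X` from `A` leaves only components of size ≤ B -/
def QQ (G : SimpleGraph V) (A X : Set V) (B : ℕ) : Prop :=
  ∀ Γ, IsCompOf G (A \ X) Γ → Γ.ncard ≤ B

lemma QQ_self (G : SimpleGraph V) (A : Set V) (B : ℕ) : QQ G A A B := by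
  intro Γ hΓ
  obtain ⟨v, hv⟩ := hΓ.2.1
  exact absurd (hΓ.1 hv) (by simp)

variable [Fintype V]

omit [Fintype V] in
lemma exists_min_sep (G : SimpleGraph V) (Γ : Set V) (B : ℕ) :
    ∃ X, (X ⊆ Γ ∧ QQ G Γ X B) ∧ ∀ Y, Y ⊆ Γ → QQ G Γ Y B → X.ncard ≤ Y.ncard := by
  classical
  set C : Set ℕ := {n | ∃ X, (X ⊆ Γ ∧ QQ G Γ X B) ∧ X.ncard = n} with hC
  have hne : C.Nonempty := ⟨Γ.ncard, Γ, ⟨le_refl Γ, QQ_self G Γ B⟩, rfl⟩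
  obtain ⟨X, hX, hcard⟩ := Nat.sInf_mem hne
  refine ⟨X, hX, ?_⟩
  intro Y hY hQY
  rw [hcard]
  exact Nat.sInf_le ⟨Y, ⟨hY, hQY⟩, rfl⟩

/-- choice of a minimum-size balanced separator of `Γ` -/
noncomputable def sep (G : SimpleGraph V) (B : ℕ) (Γ : Set V) : Set V :=
  Classical.choose (exists_min_sep G Γ B)

lemma sep_subset (G : SimpleGraph V) (B : ℕ) (Γ : Set V) : sep G B Γ ⊆ Γ :=
  (Classical.choose_spec (exists_min_sep G Γ B)).1.1

lemma sep_qq (G : SimpleGraph V) (B : ℕ) (Γ : Set V) : QQ G Γ (sep G B Γ) B :=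
  (Classical.choose_spec (exists_min_sep G Γ B)).1.2

lemma sep_min (G : SimpleGraph V) (B : ℕ) (Γ : Set V) :
    ∀ Y, Y ⊆ Γ → QQ G Γ Y B → (sep G B Γ).ncard ≤ Y.ncard :=
  (Classical.choose_spec (exists_min_sep G Γ B)).2

/-- the exchange step: a violated cut yields a strictly smaller separator -/
lemma key_aux {G : SimpleGraph V} {X L S R : Set V} {B : ℕ}
    (hLS : Disjoint L S) (hLR : Disjoint L R) (hSR : Disjoint S R)
    (hno : ∀ u ∈ L, ∀ v ∈ R, ¬ G.Adj u v)
    (hXA : X ⊆ L ∪ S ∪ R) (hQ : QQ G (L ∪ S ∪ R) X B)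
    (hLB : L.ncard ≤ B) (hlt : (S \ X).ncard < (X ∩ L).ncard) :
    ∃ Y, Y ⊆ L ∪ S ∪ R ∧ QQ G (L ∪ S ∪ R) Y B ∧ Y.ncard < X.ncard := by
  classical
  set A := L ∪ S ∪ R with hA
  have hLS' := Set.disjoint_left.mp hLS
  have hLR' := Set.disjoint_left.mp hLR
  have hSR' := Set.disjoint_left.mp hSR
  refine ⟨(X \ L) ∪ (S \ X), ?_, ?_, ?_⟩
  · intro a ha
    rcases ha with h | h
    · exact hXA h.1
    · exact Or.inl (Or.inr h.1)
  · have hdiff : A \ ((X \ L) ∪ (S \ X)) = L ∪ (R \ X) := by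
      ext a
      simp only [hA, Set.mem_diff, Set.mem_union]
      constructor
      · rintro ⟨hmem, hnot⟩
        rcases hmem with (h | h) | h
        · exact Or.inl h
        · by_cases hx : a ∈ X
          · exact absurd (Or.inl ⟨hx, fun hl => hLS' hl h⟩) hnot
          · exact absurd (Or.inr ⟨h, hx⟩) hnot
        · by_cases hx : a ∈ X
          · exact absurd (Or.inl ⟨hx, fun hl => hLR' hl h⟩) hnot
          · exact Or.inr ⟨h, hx⟩
      · rintro (h | h)
        · refine ⟨Or.inl (Or.inl h), ?_⟩
          rintro (⟨_, hnl⟩ | ⟨hs, _⟩)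
          · exact hnl h
          · exact hLS' h hs
        · refine ⟨Or.inr h.1, ?_⟩
          rintro (⟨hx, _⟩ | ⟨hs, _⟩)
          · exact h.2 hx
          · exact hSR' hs h.1
    intro Γ' hΓ'
    have hsub : Γ' ⊆ L ∪ (R \ X) := hdiff ▸ hΓ'.1
    have hnoedge : ∀ u ∈ L, ∀ v ∈ R \ X, ¬ G.Adj u v := fun u hu v hv => hno u hu v hv.1
    rcases connected_subset_union hsub hΓ'.2.2.1 hnoedge with h | h
    · exact le_trans (Set.ncard_le_ncard h (Set.toFinite L)) hLB
    · have hsub2 : Γ' ⊆ A \ X := by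
        intro a ha
        exact ⟨Or.inr (h ha).1, (h ha).2⟩
      obtain ⟨Γ'', hΓ'', hsub3⟩ := exists_comp_superset hsub2 hΓ'.2.1 hΓ'.2.2.1
      exact le_trans (Set.ncard_le_ncard hsub3 (Set.toFinite _)) (hQ Γ'' hΓ'')
  · have h1 : (X \ L).ncard = X.ncard - (X ∩ L).ncard := by
      rw [show X \ L = X \ (X ∩ L) by ext a; simp]
      exact Set.ncard_diff Set.inter_subset_left (Set.toFinite _)
    have h2 : (X ∩ L).ncard ≤ X.ncard := Set.ncard_le_ncard Set.inter_subset_left (Set.toFinite _)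
    have h3 := Set.ncard_union_le (X \ L) (S \ X)
    omega

/-- minimum balanced separators are 1-vertex-expanding -/
lemma key {G : SimpleGraph V} {A X : Set V} {B : ℕ}
    (hXA : X ⊆ A) (hQ : QQ G A X B)
    (hmin : ∀ Y, Y ⊆ A → QQ G A Y B → X.ncard ≤ Y.ncard)
    (hAB : A.ncard ≤ 2 * B) : IsVertexExpandingOn G A X 1 := by
  intro L S R hA hLS hLR hSR hL hR hno
  rw [one_mul, ← Nat.cast_min, Nat.cast_le]
  by_contra hcon
  push_neg at hcon
  have hcon1 : S.ncard < (X ∩ (L ∪ S)).ncard := lt_of_lt_of_le (lt_min_iff.mp hcon).1 (le_refl _)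
  have hcon2 : S.ncard < (X ∩ (R ∪ S)).ncard := (lt_min_iff.mp hcon).2
  subst hA
  -- turn them into the diff form
  have split : ∀ T : Set V, Disjoint T S → (X ∩ (T ∪ S)).ncard = (X ∩ T).ncard + (X ∩ S).ncard := by
    intro T hTS
    rw [Set.inter_union_distrib_left]
    exact Set.ncard_union_eq (Set.disjoint_of_subset Set.inter_subset_right Set.inter_subset_right hTS)
      (Set.toFinite _) (Set.toFinite _)
  have hS : S.ncard = (X ∩ S).ncard + (S \ X).ncard := by
    have hdisj : Disjoint (X ∩ S) (S \ X) := by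
      rw [Set.disjoint_left]; intro a ha hb; exact hb.2 ha.1
    have hSeq : (X ∩ S) ∪ (S \ X) = S := by ext a; by_cases h : a ∈ X <;> simp [h]
    rw [← Set.ncard_union_eq hdisj (Set.toFinite _) (Set.toFinite _), hSeq]
  have hL1 : (S \ X).ncard < (X ∩ L).ncard := by
    have := split L hLS; omega
  have hR1 : (S \ X).ncard < (X ∩ R).ncard := by
    have := split R hSR.symm; omega
  have hLR2 : L.ncard + R.ncard ≤ 2 * B := by
    have : (L ∪ R).ncard ≤ (L ∪ S ∪ R).ncard :=
      Set.ncard_le_ncard (by intro a ha; rcases ha with h | h; exact Or.inl (Or.inl h); exact Or.inr h)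
        (Set.toFinite _)
    rw [Set.ncard_union_eq hLR (Set.toFinite _) (Set.toFinite _)] at this
    omega
  rcases le_total L.ncard R.ncard with hc | hc
  · obtain ⟨Y, hY1, hY2, hY3⟩ := key_aux hLS hLR hSR hno hXA hQ (by omega) hL1
    exact absurd (hmin Y hY1 hY2) (by omega)
  · have hswap : R ∪ S ∪ L = L ∪ S ∪ R := by ac_rfl
    obtain ⟨Y, hY1, hY2, hY3⟩ := key_aux (L := R) (S := S) (R := L) hSR.symm hLR.symm hLS.symm
      (fun u hu v hv hadj => hno v hv u hu hadj.symm)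
      (hswap ▸ hXA) (by rw [hswap]; exact hQ) (by omega) hR1
    rw [hswap] at hY1 hY2
    exact absurd (hmin Y hY1 hY2) (by omega)


omit [Fintype V] in
lemma singleton_connected (G : SimpleGraph V) (v : V) : (G.induce {v}).Connected := by
  refine { preconnected := ?_, nonempty := ⟨⟨v, rfl⟩⟩ }
  intro x y
  have : x = y := Subtype.ext (by
    rw [Set.mem_singleton_iff.mp x.2, Set.mem_singleton_iff.mp y.2])
  rw [this]

/-- the size threshold at step `j` (of `k` total): halve, except the last step kills everything -/
def Bk (k j : ℕ) : ℕ := if j + 1 < k then 2 ^ (k - j - 1) else 0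

/-- remove from `A` a minimum balanced separator of each of its components -/
noncomputable def Xstep (G : SimpleGraph V) (A : Set V) (B : ℕ) : Set V :=
  {v | ∃ Γ, IsCompOf G A Γ ∧ v ∈ sep G B Γ}

/-- the decreasing sequence of vertex sets -/
noncomputable def DD (G : SimpleGraph V) (k : ℕ) : ℕ → Set V
  | 0 => Set.univ
  | j+1 => DD G k j \ Xstep G (DD G k j) (Bk k j)

lemma DD_succ_subset (G : SimpleGraph V) (k j : ℕ) : DD G k (j+1) ⊆ DD G k j :=
  Set.diff_subset

lemma DD_mono (G : SimpleGraph V) (k : ℕ) {a b : ℕ} (h : a ≤ b) : DD G k b ⊆ DD G k a := by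
  induction b with
  | zero => rw [Nat.le_zero.mp h]
  | succ n ih =>
    rcases Nat.lt_or_ge a (n+1) with h1 | h1
    · exact (DD_succ_subset G k n).trans (ih (Nat.lt_succ_iff.mp h1))
    · rw [Nat.le_antisymm h h1]

lemma sep_subset_Xstep {G : SimpleGraph V} {A Γ : Set V} (B : ℕ) (hΓ : IsCompOf G A Γ) :
    sep G B Γ ⊆ Xstep G A B := fun v hv => ⟨Γ, hΓ, hv⟩

lemma Xstep_inter_comp {G : SimpleGraph V} {A Γ : Set V} (B : ℕ) (hΓ : IsCompOf G A Γ) :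
    Xstep G A B ∩ Γ = sep G B Γ := by
  ext v
  constructor
  · rintro ⟨⟨Γ₀, hΓ₀, hv0⟩, hvΓ⟩
    have : Γ₀ = Γ := comp_eq_of_inter hΓ₀ hΓ ⟨v, sep_subset G B Γ₀ hv0, hvΓ⟩
    exact this ▸ hv0
  · intro hv
    exact ⟨⟨Γ, hΓ, hv⟩, sep_subset G B Γ hv⟩

/-- a nonempty connected subset of `A \ Xstep ...` has size at most `B` -/
lemma conn_sub_step_small {G : SimpleGraph V} {A W : Set V} {B : ℕ}
    (hW : W ⊆ A \ Xstep G A B) (hne : W.Nonempty) (hconn : (G.induce W).Connected) :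
    W.ncard ≤ B := by
  obtain ⟨Γ, hΓ, hWΓ⟩ := exists_comp_superset (hW.trans Set.diff_subset) hne hconn
  have hW2 : W ⊆ Γ \ sep G B Γ := by
    intro a ha
    exact ⟨hWΓ ha, fun hsep => (hW ha).2 (sep_subset_Xstep B hΓ hsep)⟩
  obtain ⟨Γ'', hΓ'', hsub3⟩ := exists_comp_superset hW2 hne hconn
  exact le_trans (Set.ncard_le_ncard hsub3 (Set.toFinite _)) (sep_qq G B Γ Γ'' hΓ'')

lemma DD_comp_bound {G : SimpleGraph V} {k : ℕ} (hcard : Fintype.card V ≤ 2 ^ k) :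
    ∀ j, ∀ Γ : Set V, IsCompOf G (DD G k j) Γ → Γ.ncard ≤ 2 ^ (k - j) := by
  intro j
  induction j with
  | zero =>
    intro Γ hΓ
    calc Γ.ncard ≤ (Set.univ : Set V).ncard := Set.ncard_le_ncard (Set.subset_univ Γ) (Set.toFinite _)
    _ = Fintype.card V := by rw [Set.ncard_univ, Nat.card_eq_fintype_card]
    _ ≤ 2 ^ (k - 0) := hcard
  | succ n ih =>
    intro Γ hΓ
    have hB : Bk k n ≤ 2 ^ (k - (n+1)) := by
      unfold Bk
      split
      · exact le_of_eq (by rw [Nat.sub_sub])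
      · exact Nat.zero_le _
    exact le_trans (conn_sub_step_small hΓ.1 hΓ.2.1 hΓ.2.2.1) hB

lemma DD_last_empty (G : SimpleGraph V) {k : ℕ} (hk : 1 ≤ k) : DD G k k = ∅ := by
  by_contra hne
  obtain ⟨v, hv⟩ := Set.nonempty_iff_ne_empty.mpr hne
  obtain ⟨k', rfl⟩ : ∃ k', k = k' + 1 := ⟨k - 1, by omega⟩
  have hBk : Bk (k'+1) k' = 0 := by unfold Bk; rw [if_neg (by omega)]
  have hsmall : ({v} : Set V).ncard ≤ 0 := by
    rw [← hBk]
    exact conn_sub_step_small (by simpa [DD] using Set.singleton_subset_iff.mpr hv)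
      (Set.singleton_nonempty v) (singleton_connected G v)
  simp at hsmall

/-- components of size ≤ 2 are trivially fully 1-expanding -/
lemma small_expanding {G : SimpleGraph V} {Γ : Set V} (hconn : (G.induce Γ).Connected)
    (hcard : Γ.ncard ≤ 2) : IsVertexExpandingOn G Γ Γ 1 := by
  intro L S R hA hLS hLR hSR hL hR hno
  exfalso
  obtain ⟨a, ha⟩ := hL
  obtain ⟨b, hb⟩ := hR
  have hab : a ≠ b := fun h => Set.disjoint_left.mp hLR ha (h ▸ hb)
  have hLSR : L.ncard + S.ncard + R.ncard ≤ 2 := by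
    have h1 : (L ∪ S).ncard = L.ncard + S.ncard :=
      Set.ncard_union_eq hLS (Set.toFinite _) (Set.toFinite _)
    have h2 : (L ∪ S ∪ R).ncard = (L ∪ S).ncard + R.ncard :=
      Set.ncard_union_eq (by
        rw [Set.disjoint_union_left]; exact ⟨hLR, hSR⟩) (Set.toFinite _) (Set.toFinite _)
    rw [hA] at h2
    omega
  have hL1 : 1 ≤ L.ncard := (Set.ncard_pos (Set.toFinite _)).mpr ⟨a, ha⟩
  have hR1 : 1 ≤ R.ncard := (Set.ncard_pos (Set.toFinite _)).mpr ⟨b, hb⟩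
  have hS0 : S = ∅ := by
    have : S.ncard = 0 := by omega
    exact (Set.ncard_eq_zero (Set.toFinite _)).mp this
  have hLa : L = {a} := by
    obtain ⟨c, hc⟩ := Set.ncard_eq_one.mp (by omega : L.ncard = 1)
    rw [hc] at ha ⊢
    rw [Set.mem_singleton_iff.mp ha]
  have hRb : R = {b} := by
    obtain ⟨c, hc⟩ := Set.ncard_eq_one.mp (by omega : R.ncard = 1)
    rw [hc] at hb ⊢
    rw [Set.mem_singleton_iff.mp hb]
  have hΓab : Γ = {a, b} := by
    rw [← hA, hS0, hLa, hRb]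
    ext x; simp; tauto
  have haΓ : a ∈ Γ := by rw [hΓab]; exact Or.inl rfl
  have hbΓ : b ∈ Γ := by rw [hΓab]; exact Or.inr rfl
  have hnoadj : ∀ x y : ↥Γ, ¬ (G.induce Γ).Adj x y := by
    intro x y hadj
    have hGadj : G.Adj (x : V) (y : V) := hadj
    have hx : (x : V) = a ∨ (x : V) = b := by
      have : (x : V) ∈ ({a, b} : Set V) := by rw [← hΓab]; exact x.2
      exact this
    have hy : (y : V) = a ∨ (y : V) = b := by
      have : (y : V) ∈ ({a, b} : Set V) := by rw [← hΓab]; exact y.2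
      exact this
    rcases hx with hx | hx <;> rcases hy with hy | hy <;> rw [hx, hy] at hGadj
    · exact G.loopless.irrefl a hGadj
    · exact hno a (hLa ▸ rfl) b (hRb ▸ rfl) hGadj
    · exact hno a (hLa ▸ rfl) b (hRb ▸ rfl) hGadj.symm
    · exact G.loopless.irrefl b hGadj
  have walk_eq : ∀ {x y : ↥Γ} (_ : (G.induce Γ).Walk x y), x = y := by
    intro x y p
    induction p with
    | nil => rfl
    | cons h q ih => exact absurd h (hnoadj _ _)
  obtain ⟨p⟩ := hconn.preconnected ⟨a, haΓ⟩ ⟨b, hbΓ⟩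
  exact hab (congrArg Subtype.val (walk_eq p))


/-- the levels of the hierarchy -/
noncomputable def levels (G : SimpleGraph V) (k : ℕ) : Fin k → Set V :=
  fun i => DD G k (k - 1 - (i : ℕ)) \ DD G k (k - (i : ℕ))

lemma levels_prefix {G : SimpleGraph V} {k : ℕ} (hk1 : 1 ≤ k) :
    ∀ m : ℕ, m < k →
      (⋃ i : Fin k, ⋃ (_ : (i : ℕ) ≤ m), levels G k i) = DD G k (k - 1 - m) := by
  intro m
  induction m with
  | zero =>
    intro h0
    have h1 : (⋃ i : Fin k, ⋃ (_ : (i : ℕ) ≤ 0), levels G k i) = levels G k ⟨0, h0⟩ := by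
      ext v
      simp only [Set.mem_iUnion]
      constructor
      · rintro ⟨i, hi, hv⟩
        have : i = ⟨0, h0⟩ := Fin.ext (Nat.le_zero.mp hi)
        rwa [this] at hv
      · intro hv
        exact ⟨⟨0, h0⟩, Nat.le_refl 0, hv⟩
    rw [h1]
    show DD G k (k - 1 - 0) \ DD G k (k - 0) = DD G k (k - 1 - 0)
    rw [show k - 0 = k from rfl, DD_last_empty G hk1, Set.diff_empty]
  | succ m ih =>
    intro hm
    have ihm := ih (by omega)
    have hsplit : (⋃ i : Fin k, ⋃ (_ : (i : ℕ) ≤ m + 1), levels G k i) =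
        (⋃ i : Fin k, ⋃ (_ : (i : ℕ) ≤ m), levels G k i) ∪ levels G k ⟨m + 1, hm⟩ := by
      ext v
      simp only [Set.mem_iUnion, Set.mem_union]
      constructor
      · rintro ⟨i, hi, hv⟩
        rcases Nat.lt_or_ge (i : ℕ) (m + 1) with h | h
        · exact Or.inl ⟨i, Nat.lt_succ_iff.mp h, hv⟩
        · have : i = ⟨m + 1, hm⟩ := Fin.ext (Nat.le_antisymm hi h)
          exact Or.inr (this ▸ hv)
      · rintro (⟨i, hi, hv⟩ | hv)
        · exact ⟨i, Nat.le_succ_of_le hi, hv⟩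
        · exact ⟨⟨m + 1, hm⟩, Nat.le_refl _, hv⟩
    rw [hsplit, ihm]
    have h2 : levels G k ⟨m + 1, hm⟩ = DD G k (k - 1 - (m + 1)) \ DD G k (k - 1 - m) := by
      show DD G k (k - 1 - (m + 1)) \ DD G k (k - (m + 1)) = _
      rw [show k - (m + 1) = k - 1 - m by omega]
    rw [h2]
    have hsub : DD G k (k - 1 - m) ⊆ DD G k (k - 1 - (m + 1)) :=
      DD_mono G k (show k - 1 - (m + 1) ≤ k - 1 - m by omega)
    exact Set.union_diff_cancel hsub

lemma levels_union {G : SimpleGraph V} {k : ℕ} (hk1 : 1 ≤ k) :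
    (⋃ i, levels G k i) = Set.univ := by
  have h1 : (⋃ i, levels G k i) = ⋃ i : Fin k, ⋃ (_ : (i : ℕ) ≤ k - 1), levels G k i := by
    ext v
    simp only [Set.mem_iUnion]
    constructor
    · rintro ⟨i, hv⟩; exact ⟨i, by omega, hv⟩
    · rintro ⟨i, _, hv⟩; exact ⟨i, hv⟩
  rw [h1, levels_prefix hk1 (k - 1) (by omega), Nat.sub_self]
  rfl

lemma levels_disjoint {G : SimpleGraph V} {k : ℕ} :
    Pairwise fun i j => Disjoint (levels G k i) (levels G k j) := by
  have key : ∀ i j : Fin k, (i : ℕ) < (j : ℕ) → Disjoint (levels G k i) (levels G k j) := by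
    intro i j hij
    rw [Set.disjoint_left]
    intro v hvi hvj
    apply hvj.2
    have hle : k - (j : ℕ) ≤ k - 1 - (i : ℕ) := by omega
    exact DD_mono G k hle hvi.1
  intro i j hne
  rcases Nat.lt_or_ge (i : ℕ) (j : ℕ) with h | h
  · exact key i j h
  · have : (j : ℕ) < (i : ℕ) :=
      Nat.lt_of_le_of_ne h (fun e => hne (Fin.ext e.symm))
    exact (key j i this).symm

lemma levels_expanding {G : SimpleGraph V} {k : ℕ} (hk1 : 1 ≤ k)
    (hcard : Fintype.card V ≤ 2 ^ k) (ℓ : Fin k) (Γ : Set V)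
    (hΓ : IsCompOf G (⋃ i, ⋃ (_ : i ≤ ℓ), levels G k i) Γ) :
    IsVertexExpandingOn G Γ (levels G k ℓ ∩ Γ) 1 := by
  have hU : (⋃ i, ⋃ (_ : i ≤ ℓ), levels G k i) = DD G k (k - 1 - (ℓ : ℕ)) := by
    have h1 : (⋃ i, ⋃ (_ : i ≤ ℓ), levels G k i)
        = ⋃ i : Fin k, ⋃ (_ : (i : ℕ) ≤ (ℓ : ℕ)), levels G k i := by
      simp only [Fin.le_def]
    rw [h1]
    exact levels_prefix hk1 (ℓ : ℕ) ℓ.isLt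
  rw [hU] at hΓ
  set j := k - 1 - (ℓ : ℕ) with hj
  have hlk : (ℓ : ℕ) < k := ℓ.isLt
  have hPl : levels G k ℓ ∩ Γ = sep G (Bk k j) Γ := by
    have e2 : k - (ℓ : ℕ) = j + 1 := by omega
    have h3 : levels G k ℓ = DD G k j ∩ Xstep G (DD G k j) (Bk k j) := by
      show DD G k j \ DD G k (k - (ℓ : ℕ)) = _
      rw [e2]
      show DD G k j \ (DD G k j \ Xstep G (DD G k j) (Bk k j)) = _
      ext v
      simp only [Set.mem_diff, Set.mem_inter_iff]
      tauto
    rw [h3, Set.inter_assoc, Xstep_inter_comp (Bk k j) hΓ]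
    exact Set.inter_eq_self_of_subset_right ((sep_subset G _ Γ).trans hΓ.1)
  rw [hPl]
  have hbound : Γ.ncard ≤ 2 ^ (k - j) := DD_comp_bound hcard j Γ hΓ
  rcases Nat.eq_zero_or_pos (ℓ : ℕ) with hl | hl
  · -- bottom level: the separator is the whole component, which has ≤ 2 vertices
    have hBk0 : Bk k j = 0 := by unfold Bk; rw [if_neg (by omega)]
    have hsep_eq : sep G (Bk k j) Γ = Γ := by
      refine Set.Subset.antisymm (sep_subset G _ Γ) ?_
      intro v hv
      by_contra hns
      have hsub : ({v} : Set V) ⊆ Γ \ sep G (Bk k j) Γ := by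
        intro w hw
        rw [Set.mem_singleton_iff.mp hw]
        exact ⟨hv, hns⟩
      obtain ⟨Γ'', hΓ'', _⟩ :=
        exists_comp_superset hsub (Set.singleton_nonempty v) (singleton_connected G v)
      have hle := sep_qq G (Bk k j) Γ Γ'' hΓ''
      rw [hBk0] at hle
      have hpos := (Set.ncard_pos (Set.toFinite _)).mpr hΓ''.2.1
      omega
    rw [hsep_eq]
    apply small_expanding hΓ.2.2.1
    have e4 : k - j = 1 := by omega
    rw [e4, pow_one] at hbound
    exact hbound
  · have hjk : j + 1 < k := by omega
    have hBk : Bk k j = 2 ^ (k - j - 1) := by unfold Bk; rw [if_pos hjk]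
    apply key (sep_subset G _ Γ) (sep_qq G _ Γ) (sep_min G _ Γ)
    rw [hBk]
    calc Γ.ncard ≤ 2 ^ (k - j) := hbound
    _ = 2 * 2 ^ (k - j - 1) := by
        conv_lhs => rw [show k - j = (k - j - 1) + 1 by omega]
        rw [pow_succ]; ring

end VEH

/-- Every graph on `n ≥ 2` vertices has a vertex partition into
`h ≤ ⌈log₂ n⌉` levels inducing an `(h, 1)`-vertex-expander hierarchy. -/
theorem stmt_5 (V : Type) [Fintype V] (G : SimpleGraph V)
    (h2 : 2 ≤ Fintype.card V) :
    ∃ (h : ℕ) (P : Fin h → Set V),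
      h ≤ Nat.clog 2 (Fintype.card V) ∧
      (⋃ i, P i) = Set.univ ∧
      (Pairwise fun i j => Disjoint (P i) (P j)) ∧
      ∀ ℓ : Fin h, ∀ Γ : Set V,
        IsCompOf G (⋃ i, ⋃ (_ : i ≤ ℓ), P i) Γ →
        IsVertexExpandingOn G Γ (P ℓ ∩ Γ) 1 := by
  set k := Nat.clog 2 (Fintype.card V) with hk
  have hk1 : 1 ≤ k := Nat.clog_pos one_lt_two h2
  have hcard : Fintype.card V ≤ 2 ^ k := Nat.le_pow_clog one_lt_two _
  exact ⟨k, VEH.levels G k, le_refl k, VEH.levels_union hk1, VEH.levels_disjoint,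
    fun ℓ Γ hΓ => VEH.levels_expanding hk1 hcard ℓ Γ hΓ⟩
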